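/- Let M be the structure monoid of a finite RC-quasigroup (X, ⊳) of size n, with I-structure ν : ℕⁿ → M satisfying ν(x) = x for x ∈ X and the product formulas ν(uv) = ν(u)ν(π(u)[v]), π(uv) = π(π(u)[v])∘π(u). Then for all x₁,...,x_r in X, ν(x₁⋯x_r) = Σ_r(x₁,...,x_r), where Σ₁(x₁) = x₁ and Σ_r(x₁,...,x_r) = Σ_{r-1}(x₁,...,x_{r-1})·Π_r(x₁,...,x_r). -/

import Mathlib

/-- `PiAux op l y` is `Π_{r+1}(x₁, ..., x_r, y)` where `l = [x_r, ..., x₁]`. -/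
def PiAux {X : Type*} (op : X → X → X) : List X → X → X
  | [], y => y
  | a :: l, y => op (PiAux op l a) (PiAux op l y)

/-- `SigmaRev op l` is the word `Σ_r(x₁, ..., x_r)` (as its list of letters
`[Π₁(x₁), Π₂(x₁,x₂), ..., Π_r(x₁,...,x_r)]`) for `l = [x_r, ..., x₁]` the reversed argument
list, following `Σ₁(x₁) = x₁`, `Σ_r(x₁,...,x_r) = Σ_{r-1}(x₁,...,x_{r-1})·Π_r(x₁,...,x_r)`. -/
def SigmaRev {X : Type*} (op : X → X → X) : List X → List X
  | [] => []
  | a :: l => SigmaRev op l ++ [PiAux op l a]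

/-- The defining relations `x(x ⊳ y) = y(y ⊳ x)` of the structure monoid of `(X, ⊳)`. -/
def structRels {X : Type*} (op : X → X → X) : FreeMonoid X → FreeMonoid X → Prop :=
  fun a b => ∃ x y : X,
    a = FreeMonoid.of x * FreeMonoid.of (op x y) ∧ b = FreeMonoid.of y * FreeMonoid.of (op y x)

/-- in the structure monoid `M` of a finite RC-quasigroup `(X, ⊳)`, with
I-structure `ν` satisfying `ν(x) = x` on `X` and the product formulas, one has
`ν(x₁⋯x_r) = Σ_r(x₁,...,x_r)` for all `x₁, ..., x_r ∈ X` (the word `x₁⋯x_r` being viewed in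
`ℕⁿ` as the vector of letter multiplicities). -/
theorem stmt6 {X : Type*} [Fintype X] [DecidableEq X] (op : X → X → X)
    (hRC : ∀ x y z : X, op (op x y) (op x z) = op (op y x) (op y z))
    (hL : ∀ x : X, Function.Bijective (op x))
    (ν : (X → ℕ) → PresentedMonoid (structRels op))
    (hν : Function.Bijective ν) (hone : ν 0 = 1)
    (hof : ∀ x : X, ν (Pi.single x 1) = PresentedMonoid.of (structRels op) x)
    (π : (X → ℕ) → Equiv.Perm X)
    (hprod : ∀ u v : X → ℕ, ν (u + v) = ν u * ν (fun x => v ((π u).symm x)))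
    (hperm : ∀ (u v : X → ℕ) (x : X),
      π (u + v) x = π (fun z => v ((π u).symm z)) (π u x)) :
    ∀ l : List X,
      ν (fun x => l.count x)
        = ((SigmaRev op l.reverse).map (PresentedMonoid.of (structRels op))).prod := by
  -- shifting a single through π u
  have hshift : ∀ (u : X → ℕ) (a : X),
      (fun w => (Pi.single a 1 : X → ℕ) ((π u).symm w)) = Pi.single (π u a) 1 := by
    intro u a
    funext w
    by_cases h : w = π u a <;>
      simp [Pi.single_apply, Equiv.symm_apply_eq, h]
  -- product with a single letter
  have hsingle : ∀ (u : X → ℕ) (a : X),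
      ν (u + Pi.single a 1) = ν u * PresentedMonoid.of (structRels op) (π u a) := by
    intro u a
    rw [hprod, hshift, hof]
  -- π 0 = id
  have hπ0 : ∀ x : X, π 0 x = x := by
    intro x
    have h1 : ν (0 + Pi.single x 1) = ν (Pi.single (π 0 x) 1) := by
      rw [hprod, hone, one_mul, hshift]
    rw [zero_add] at h1
    have h2 := hν.1 h1
    have h3 := congrFun h2 x
    simp only [Pi.single_apply, if_pos rfl] at h3
    by_cases h : x = π 0 x
    · exact h.symm
    · simp [h] at h3
  -- π on a single basis vector is op
  have hrel : ∀ x y : X,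
      PresentedMonoid.of (structRels op) x * PresentedMonoid.of (structRels op) (op x y)
        = PresentedMonoid.of (structRels op) y * PresentedMonoid.of (structRels op) (op y x) :=
    fun x y => Quotient.sound (ConGen.Rel.of _ _ ⟨x, y, rfl, rfl⟩)
  have hrel2 : ∀ x z : X,
      ν (Pi.single x 1 + Pi.single z 1)
        = PresentedMonoid.of (structRels op) x
          * PresentedMonoid.of (structRels op) (π (Pi.single x 1) z) := by
    intro x z
    rw [hsingle, hof]
  have key : ∀ x y : X,
      Pi.single x 1 + Pi.single ((π (Pi.single x 1)).symm (op x y)) 1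
        = (Pi.single y 1 + Pi.single ((π (Pi.single y 1)).symm (op y x)) 1 : X → ℕ) := by
    intro x y
    apply hν.1
    rw [hrel2, hrel2, Equiv.apply_symm_apply, Equiv.apply_symm_apply]
    exact hrel x y
  have hoff : ∀ x y : X, x ≠ y → π (Pi.single x 1) y = op x y := by
    intro x y hxy
    set z := (π (Pi.single x 1)).symm (op x y) with hz
    have h1 := congrFun (key x y) y
    simp only [Pi.add_apply, Pi.single_apply, if_neg (Ne.symm hxy), if_pos rfl] at h1
    have hyz : y = z := by
      by_cases h : y = z
      · exact h
      · rw [← hz, if_neg h] at h1; split_ifs at h1 <;> omega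
    rw [← hyz] at hz
    have := congrArg (π (Pi.single x 1)) hz
    rw [Equiv.apply_symm_apply] at this
    exact this.symm ▸ rfl
  have hπs : ∀ x y : X, π (Pi.single x 1) y = op x y := by
    intro x y
    by_cases h : x = y
    · subst h
      obtain ⟨w, hw⟩ := (π (Pi.single x 1)).surjective (op x x)
      by_cases hwx : w = x
      · exact hwx ▸ hw
      · exfalso
        have := hoff x w (Ne.symm hwx)
        rw [this] at hw
        exact hwx ((hL x).1 hw)
    · exact hoff x y h
  -- π of a word computes PiAux
  have hπw : ∀ (m : List X) (y : X), π (fun x => m.reverse.count x) y = PiAux op m y := by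
    intro m
    induction m with
    | nil =>
        intro y
        have : (fun x => (([] : List X).reverse).count x) = (0 : X → ℕ) := by
          funext x; simp
        rw [this]
        exact hπ0 y
    | cons a m ih =>
        intro y
        have hc : (fun x => ((a :: m).reverse).count x)
            = (fun x => m.reverse.count x) + Pi.single a 1 := by
          funext x
          simp [List.count_append, Pi.single_apply, List.count_singleton', eq_comm]
        rw [hc, hperm, hshift, hπs, ih, ih]
        rfl
  -- main induction
  have main : ∀ m : List X,
      ν (fun x => m.reverse.count x)
        = ((SigmaRev op m).map (PresentedMonoid.of (structRels op))).prod := by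
    intro m
    induction m with
    | nil =>
        have : (fun x => (([] : List X).reverse).count x) = (0 : X → ℕ) := by
          funext x; simp
        rw [this, hone]
        rfl
    | cons a m ih =>
        have hc : (fun x => ((a :: m).reverse).count x)
            = (fun x => m.reverse.count x) + Pi.single a 1 := by
          funext x
          simp [List.count_append, Pi.single_apply, List.count_singleton', eq_comm]
        rw [hc, hsingle, ih, hπw]
        simp [SigmaRev]
  intro l
  have := main l.reverse
  rwa [List.reverse_reverse] at this
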